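/- arXiv:1809.11115 — 5 statements merged into one kernel-verified Lean document; each statement's English description precedes it below -/
import Mathlib

section
/- The unique solution H to the equation L H = e e^T - n I with zero diagonal entries is given by H_{ij} = n (e_j - e_i)^T L^+ e_j, where L^+ is the Moore–Penrose pseudo-inverse of L. -/
open Matrix

/-- `P` is the Moore–Penrose pseudo-inverse of `M`. -/
def IsMoorePenroseInverse {n : ℕ} (M P : Matrix (Fin n) (Fin n) ℝ) : Prop :=
  M * P * M = M ∧ P * M * P = P ∧ (M * P)ᵀ = M * P ∧ (P * M)ᵀ = P * M

theorem hitting_times_formula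
    (n : ℕ) (A : Matrix (Fin n) (Fin n) ℝ)
    (hsymm : A.IsSymm) (hnonneg : ∀ i j, 0 ≤ A i j) (hdiag : ∀ i, A i i = 0)
    (hconn : ∀ i j : Fin n, Relation.ReflTransGen (fun a b => 0 < A a b) i j)
    (L : Matrix (Fin n) (Fin n) ℝ)
    (hL : L = Matrix.diagonal (A.mulVec 1) - A)
    (Lp : Matrix (Fin n) (Fin n) ℝ) (hLp : IsMoorePenroseInverse L Lp)
    (H : Matrix (Fin n) (Fin n) ℝ)
    (hHdiag : ∀ i, H i i = 0)
    (hH : L * H = Matrix.vecMulVec (fun _ => (1 : ℝ)) (fun _ => (1 : ℝ)) - (n : ℝ) • 1) :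
    ∀ i j, H i j = (n : ℝ) * ((Pi.single j 1 - Pi.single i 1) ⬝ᵥ Lp.mulVec (Pi.single j 1)) := by
  obtain ⟨h1, h2, h3, h4⟩ := hLp
  -- symmetry of L
  have hAsymm : ∀ i j, A i j = A j i := fun i j => (hsymm.apply i j).symm
  have hLsymm : Lᵀ = L := by
    rw [hL, transpose_sub, diagonal_transpose, hsymm]
  -- L annihilates the all-ones vector
  have hLe : L *ᵥ (fun _ => (1 : ℝ)) = 0 := by
    subst hL
    funext i
    simp [mulVec, dotProduct, Matrix.sub_apply, diagonal_apply, Finset.sum_sub_distrib,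
      Finset.sum_ite_eq]
  -- kernel of L is the constants
  have hker : ∀ x : Fin n → ℝ, L *ᵥ x = 0 → ∀ a b, x a = x b := by
    intro x hx
    have hrow : ∀ i, (∑ j, A i j) * x i = ∑ j, A i j * x j := by
      intro i
      have := congrFun hx i
      rw [hL] at this
      simp only [sub_mulVec, Pi.sub_apply, Pi.zero_apply, sub_eq_zero] at this
      have hd : (Matrix.diagonal (A.mulVec 1) *ᵥ x) i = (∑ j, A i j) * x i := by
        simp [mulVec, dotProduct, diagonal_apply, Finset.sum_ite_eq]
      have ha : (A *ᵥ x) i = ∑ j, A i j * x j := by simp [mulVec, dotProduct]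
      rw [hd, ha] at this
      exact this
    have hquad : ∑ i, ∑ j, A i j * (x i - x j) ^ 2 = 0 := by
      have e1 : ∀ i j, A i j * (x i - x j) ^ 2 =
          A i j * x i ^ 2 + A i j * x j ^ 2 - 2 * (A i j * (x i * x j)) := by
        intro i j; ring
      have swap : ∑ i, ∑ j, A i j * x j ^ 2 = ∑ i, ∑ j, A i j * x i ^ 2 := by
        rw [Finset.sum_comm]
        refine Finset.sum_congr rfl fun j _ => Finset.sum_congr rfl fun i _ => ?_
        rw [hAsymm i j]
      have cross : ∀ i, ∑ j, A i j * (x i * x j) = ∑ j, A i j * x i ^ 2 := by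
        intro i
        have : ∑ j, A i j * (x i * x j) = x i * ∑ j, A i j * x j := by
          rw [Finset.mul_sum]; refine Finset.sum_congr rfl fun j _ => by ring
        rw [this, ← hrow i, ← Finset.sum_mul]
        ring
      calc ∑ i, ∑ j, A i j * (x i - x j) ^ 2
          = ∑ i, ∑ j, (A i j * x i ^ 2 + A i j * x j ^ 2 - 2 * (A i j * (x i * x j))) := by
            refine Finset.sum_congr rfl fun i _ => Finset.sum_congr rfl fun j _ => e1 i j
        _ = (∑ i, ∑ j, A i j * x i ^ 2) + (∑ i, ∑ j, A i j * x j ^ 2)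
              - 2 * ∑ i, ∑ j, A i j * (x i * x j) := by
            simp [Finset.sum_sub_distrib, Finset.sum_add_distrib, Finset.mul_sum]
        _ = 0 := by
            rw [swap]
            have : ∑ i, ∑ j, A i j * (x i * x j) = ∑ i, ∑ j, A i j * x i ^ 2 :=
              Finset.sum_congr rfl fun i _ => cross i
            rw [this]; ring
    have hterm : ∀ i ∈ Finset.univ, ∀ j ∈ Finset.univ, A i j * (x i - x j) ^ 2 = 0 := by
      have hnn : ∀ i (_ : i ∈ (Finset.univ : Finset (Fin n))),
          0 ≤ ∑ j, A i j * (x i - x j) ^ 2 := fun i _ =>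
        Finset.sum_nonneg fun j _ => mul_nonneg (hnonneg i j) (sq_nonneg _)
      have h0 := (Finset.sum_eq_zero_iff_of_nonneg hnn).mp hquad
      intro i hi j hj
      exact (Finset.sum_eq_zero_iff_of_nonneg
        (fun j _ => mul_nonneg (hnonneg i j) (sq_nonneg _))).mp (h0 i hi) j hj
    have hstep : ∀ a b, 0 < A a b → x a = x b := by
      intro a b hab
      have := hterm a (Finset.mem_univ a) b (Finset.mem_univ b)
      have h2' : (x a - x b) ^ 2 = 0 := by
        rcases mul_eq_zero.mp this with h | h
        · exact absurd h (ne_of_gt hab)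
        · exact h
      have := pow_eq_zero_iff (n := 2) (by norm_num) |>.mp h2'
      linarith [sub_eq_zero.mp this]
    intro a b
    induction hconn a b with
    | refl => rfl
    | tail _ hcb ih => exact ih.trans (hstep _ _ hcb)
  -- (L * Lp) *ᵥ e = 0
  have hLLpe : (L * Lp) *ᵥ (fun _ => (1 : ℝ)) = 0 := by
    rw [← h3, transpose_mul, ← mulVec_mulVec, hLsymm, hLe, mulVec_zero]
  -- key : L * H = -(n) • (L * Lp)
  have key : L * H = (-(n : ℝ)) • (L * Lp) := by
    have h5 : L * H = (L * Lp) * (L * H) := by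
      conv_lhs => rw [← h1, mul_assoc]
    rw [h5, hH, mul_sub]
    have hv : (L * Lp) * Matrix.vecMulVec (fun _ => (1 : ℝ)) (fun _ => (1 : ℝ)) = 0 := by
      ext i j
      rw [mul_apply]
      simp only [vecMulVec_apply, mul_one, Matrix.zero_apply]
      have := congrFun hLLpe i
      simpa [mulVec, dotProduct] using this
    rw [hv]
    simp [Matrix.mul_smul]
  -- the candidate solution
  set H' : Matrix (Fin n) (Fin n) ℝ :=
    Matrix.of (fun i j => (n : ℝ) * Lp j j - (n : ℝ) * Lp i j) with hH'
  have hLH' : L * H' = L * H := by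
    rw [key]
    ext i j
    have lhs : (L * H') i j = (∑ k, L i k) * ((n : ℝ) * Lp j j)
        - (n : ℝ) * (L * Lp) i j := by
      simp only [mul_apply, hH', of_apply, mul_sub]
      rw [Finset.sum_sub_distrib, ← Finset.sum_mul]
      congr 1
      rw [Finset.mul_sum]
      refine Finset.sum_congr rfl fun k _ => by ring
    have hsum : (∑ k, L i k) = 0 := by
      have := congrFun hLe i
      simpa [mulVec, dotProduct] using this
    rw [lhs, hsum]
    simp
  -- uniqueness: columns of H - H' are in ker L, and have a zero entry
  intro i j
  have hxker : L *ᵥ (fun a => H a j - H' a j) = 0 := by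
    have hz : L * (H - H') = 0 := by rw [mul_sub, hLH', sub_self]
    funext a
    have := congrFun (congrFun hz a) j
    simpa [mul_apply, mulVec, dotProduct, Matrix.sub_apply, Finset.mul_sum, mul_sub] using this
  have hcol := hker _ hxker i j
  have hH'jj : H' j j = 0 := by simp [hH']
  have hij : H i j = H' i j := by
    have : H i j - H' i j = H j j - H' j j := hcol
    rw [hHdiag j, hH'jj] at this
    linarith
  rw [hij]
  have hmv : ∀ k, (Lp *ᵥ Pi.single j 1) k = Lp k j := by
    intro k; simp [mulVec_single]
  rw [sub_dotProduct]
  have d1 : Pi.single j (1:ℝ) ⬝ᵥ (Lp *ᵥ Pi.single j 1) = Lp j j := by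
    rw [single_dotProduct, hmv]; ring
  have d2 : Pi.single i (1:ℝ) ⬝ᵥ (Lp *ᵥ Pi.single j 1) = Lp i j := by
    rw [single_dotProduct, hmv]; ring
  rw [d1, d2]
  simp [hH']
  ring
end

section
/- For the weighted random walk with generator -W^{-1}L, the matrix H of mean hitting times satisfies L H = w e^T - |w| I, where |w| = \sum_i w_i. -/
open Matrix

/-- The mean hitting times of the weighted random walk with generator `-W⁻¹L`
(rate `A i j / w i` from `i` to `j`), characterized by the first-step equations,
satisfy `L H = w eᵀ - |w| I`. -/
theorem weighted_hitting_times_matrix_equation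
    (n : ℕ) (A : Matrix (Fin n) (Fin n) ℝ)
    (hsymm : A.IsSymm) (hnonneg : ∀ i j, 0 ≤ A i j) (hdiag : ∀ i, A i i = 0)
    (hconn : ∀ i j : Fin n, Relation.ReflTransGen (fun a b => 0 < A a b) i j)
    (d : Fin n → ℝ) (hd : d = A.mulVec 1) (hdpos : ∀ i, 0 < d i)
    (w : Fin n → ℝ) (hw : ∀ i, 0 < w i)
    (L : Matrix (Fin n) (Fin n) ℝ)
    (hL : L = Matrix.diagonal d - A)
    (H : Matrix (Fin n) (Fin n) ℝ)
    (hHdiag : ∀ i, H i i = 0)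
    (hHstep : ∀ i j, i ≠ j → H i j = w i / d i + ∑ k, (A i k / d i) * H k j) :
    L * H = Matrix.vecMulVec w (fun _ => (1 : ℝ)) - (∑ i, w i) • 1 := by
  have hdne : ∀ i, d i ≠ 0 := fun i => (hdpos i).ne'
  have hLH : ∀ a b, (L * H) a b = d a * H a b - ∑ k, A a k * H k b := by
    intro a b
    rw [hL, Matrix.sub_mul, Matrix.sub_apply, Matrix.diagonal_mul, Matrix.mul_apply]
  -- off-diagonal entries
  have hoff : ∀ a b, a ≠ b → (L * H) a b = w a := by
    intro a b hab
    rw [hLH, hHstep a b hab, mul_add, mul_div_cancel₀ _ (hdne a), Finset.mul_sum]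
    have hk : ∀ k, d a * (A a k / d a * H k b) = A a k * H k b := by
      intro k
      rw [mul_comm (A a k / d a), mul_comm, mul_assoc, div_mul_cancel₀ _ (hdne a), mul_comm]
    simp only [hk]
    ring
  -- row sums of L are zero
  have hrow : ∀ a, ∑ k, L a k = 0 := by
    intro a
    have : d a = ∑ k, A a k := by
      rw [hd]; simp [Matrix.mulVec, dotProduct]
    simp [hL, Matrix.sub_apply, Finset.sum_sub_distrib, Matrix.diagonal_apply, ← this]
  -- column sums of L are zero (by symmetry)
  have hLsymm : ∀ a k, L a k = L k a := by
    intro a k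
    have hA : A k a = A a k := by
      have := hsymm; rw [Matrix.IsSymm] at this
      calc A k a = Aᵀ a k := rfl
        _ = A a k := by rw [this]
    simp [hL, Matrix.sub_apply, Matrix.diagonal_apply, hA]
    rcases eq_or_ne a k with h | h
    · simp [h]
    · simp [h, Ne.symm h]
  have hcol : ∀ k, ∑ a, L a k = 0 := by
    intro k
    calc ∑ a, L a k = ∑ a, L k a := by simp_rw [fun a => hLsymm a k]
      _ = 0 := hrow k
  -- column sums of L*H are zero
  have hcol0 : ∀ b, ∑ a, (L * H) a b = 0 := by
    intro b
    simp only [Matrix.mul_apply]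
    rw [Finset.sum_comm]
    simp_rw [← Finset.sum_mul]
    simp [hcol]
  -- diagonal entries
  have hdiagLH : ∀ b, (L * H) b b = w b - ∑ i, w i := by
    intro b
    have h1 : ∑ a, (L * H) a b = (L * H) b b + ∑ a ∈ Finset.univ.erase b, (L * H) a b :=
      (Finset.add_sum_erase _ _ (Finset.mem_univ b)).symm
    have h2 : ∑ a ∈ Finset.univ.erase b, (L * H) a b = ∑ a ∈ Finset.univ.erase b, w a := by
      refine Finset.sum_congr rfl fun a ha => hoff a b (Finset.ne_of_mem_erase ha)
    have h3 : ∑ a ∈ Finset.univ.erase b, w a = (∑ i, w i) - w b := by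
      rw [← Finset.add_sum_erase _ _ (Finset.mem_univ b)]; ring
    rw [hcol0 b, h2, h3] at h1
    linarith
  ext i j
  by_cases h : i = j
  · subst h
    rw [hdiagLH]
    simp [Matrix.vecMulVec_apply, Matrix.sub_apply, Matrix.one_apply]
  · rw [hoff i j h]
    simp [Matrix.vecMulVec_apply, Matrix.sub_apply, Matrix.one_apply, h]
end

section
/- The solution H with zero diagonal entries to L H = w e^T - |w| I is given by H_{ij} = |w| (e_j - e_i)^T L^+ (e_j - \pi), where \pi = w/|w| and L^+ is the pseudo-inverse of L. -/
open Matrix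

lemma kernel_const {n : ℕ} (A : Matrix (Fin n) (Fin n) ℝ)
    (hsymm : A.IsSymm) (hnonneg : ∀ i j, 0 ≤ A i j)
    (hconn : ∀ i j : Fin n, Relation.ReflTransGen (fun a b => 0 < A a b) i j)
    (x : Fin n → ℝ)
    (hx : (Matrix.diagonal (A.mulVec 1) - A).mulVec x = 0) :
    ∀ i j, x i = x j := by
  have step : ∀ i k, 0 < A i k → x i = x k := by
    have h0 : x ⬝ᵥ (Matrix.diagonal (A.mulVec 1) - A).mulVec x = 0 := by
      rw [hx]; simp
    set S1 := ∑ i, ∑ k, A i k * (x i)^2 with hS1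
    set S2 := ∑ i, ∑ k, A i k * (x i * x k) with hS2
    set S3 := ∑ i, ∑ k, A i k * (x k)^2 with hS3
    have hswap : S3 = S1 := by
      rw [hS1, hS3, Finset.sum_comm]
      exact Finset.sum_congr rfl fun i _ => Finset.sum_congr rfl fun k _ => by
        rw [hsymm.apply]
    have hLHS : x ⬝ᵥ (Matrix.diagonal (A.mulVec 1) - A).mulVec x = S1 - S2 := by
      simp only [dotProduct, Matrix.mulVec, dotProduct, Matrix.sub_apply, Matrix.diagonal_apply,
        Pi.one_apply, mul_one, sub_mul, ite_mul, zero_mul, Finset.sum_sub_distrib,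
        Finset.sum_ite_eq, Finset.sum_ite_eq', Finset.mem_univ, if_true, hS1, hS2]
      rw [← Finset.sum_sub_distrib]
      refine Finset.sum_congr rfl fun i _ => ?_
      rw [mul_sub]
      congr 1
      · rw [show x i * ((∑ k, A i k) * x i) = (∑ k, A i k) * (x i * x i) by ring,
          Finset.sum_mul]
        exact Finset.sum_congr rfl fun k _ => by ring
      · rw [Finset.mul_sum]
        exact Finset.sum_congr rfl fun k _ => by ring
    have hexp2 : ∑ i, ∑ k, A i k * (x i - x k)^2 = S1 - 2*S2 + S3 := by
      have h : ∀ i k : Fin n, A i k * (x i - x k)^2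
          = A i k * (x i)^2 - 2*(A i k * (x i * x k)) + A i k * (x k)^2 := fun i k => by ring
      simp_rw [h]
      rw [hS1, hS2, hS3]
      simp [Finset.sum_add_distrib, Finset.sum_sub_distrib, Finset.mul_sum]
    have htot : ∑ i, ∑ k, A i k * (x i - x k)^2 = 0 := by
      rw [hexp2, hswap]
      rw [hLHS] at h0
      linarith
    have hkey : ∀ i ∈ Finset.univ, ∀ k ∈ (Finset.univ : Finset (Fin n)),
        A i k * (x i - x k)^2 = 0 := by
      have h1 : ∀ i ∈ (Finset.univ : Finset (Fin n)),
          0 ≤ ∑ k, A i k * (x i - x k)^2 := fun i _ =>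
        Finset.sum_nonneg fun k _ => mul_nonneg (hnonneg i k) (sq_nonneg _)
      have h2 := (Finset.sum_eq_zero_iff_of_nonneg h1).mp htot
      intro i hi k hk
      have h3 : ∀ k ∈ (Finset.univ : Finset (Fin n)), 0 ≤ A i k * (x i - x k)^2 :=
        fun k _ => mul_nonneg (hnonneg i k) (sq_nonneg _)
      exact (Finset.sum_eq_zero_iff_of_nonneg h3).mp (h2 i hi) k hk
    intro i k hik
    have := hkey i (Finset.mem_univ i) k (Finset.mem_univ k)
    have h4 : (x i - x k)^2 = 0 := by
      rcases mul_eq_zero.mp this with h | h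
      · exact absurd h (ne_of_gt hik)
      · exact h
    have := pow_eq_zero_iff (n := 2) (by norm_num) |>.mp h4
    linarith
  intro i j
  induction hconn i j with
  | refl => rfl
  | tail _ hab ih => exact ih.trans (step _ _ hab)

theorem weighted_hitting_times_formula
    (n : ℕ) (A : Matrix (Fin n) (Fin n) ℝ)
    (hsymm : A.IsSymm) (hnonneg : ∀ i j, 0 ≤ A i j) (hdiag : ∀ i, A i i = 0)
    (hconn : ∀ i j : Fin n, Relation.ReflTransGen (fun a b => 0 < A a b) i j)
    (w : Fin n → ℝ) (hw : ∀ i, 0 < w i)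
    (π : Fin n → ℝ) (hπ : π = fun i => w i / ∑ k, w k)
    (L : Matrix (Fin n) (Fin n) ℝ)
    (hL : L = Matrix.diagonal (A.mulVec 1) - A)
    (Lp : Matrix (Fin n) (Fin n) ℝ) (hLp : IsMoorePenroseInverse L Lp)
    (H : Matrix (Fin n) (Fin n) ℝ)
    (hHdiag : ∀ i, H i i = 0)
    (hH : L * H = Matrix.vecMulVec w (fun _ => (1 : ℝ)) - (∑ i, w i) • 1) :
    ∀ i j, H i j =
      (∑ k, w k) * ((Pi.single j 1 - Pi.single i 1) ⬝ᵥ Lp.mulVec (Pi.single j 1 - π)) := by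
  intro i j
  have hne : Nonempty (Fin n) := ⟨i⟩
  have hn : 0 < n := Fin.pos i
  set s : ℝ := ∑ k, w k with hs'
  have hs : 0 < s := Finset.sum_pos (fun k _ => hw k) ⟨i, Finset.mem_univ i⟩
  -- L is symmetric
  have hLsymm : Lᵀ = L := by
    rw [hL, Matrix.transpose_sub, Matrix.diagonal_transpose, hsymm]
  -- the all-ones vector is in the kernel of L
  have hL1 : L *ᵥ (fun _ => (1:ℝ)) = 0 := by
    rw [hL, Matrix.sub_mulVec]
    funext k
    simp [Matrix.mulVec, dotProduct, Matrix.diagonal_apply, Finset.sum_ite_eq]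
  have h1L : (fun _ => (1:ℝ)) ᵥ* L = 0 := by
    rw [← hLsymm, Matrix.vecMul_transpose]
    exact hL1
  -- Q := L * Lp fixes every vector whose coordinates sum to 0
  have hQfix : ∀ y : Fin n → ℝ, (∑ k, y k) = 0 → (L * Lp) *ᵥ y = y := by
    intro y hy
    set z : Fin n → ℝ := y - (L * Lp) *ᵥ y with hz
    have hzL : z ᵥ* L = 0 := by
      have h2 : ((L * Lp) *ᵥ y) ᵥ* L = y ᵥ* L := by
        rw [← Matrix.vecMul_transpose, Matrix.vecMul_vecMul, hLp.2.2.1,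
          Matrix.mul_assoc, ← Matrix.mul_assoc, hLp.1]
      rw [hz, Matrix.sub_vecMul, h2, sub_self]
    have hLz : L *ᵥ z = 0 := by
      rw [← hLsymm, Matrix.mulVec_transpose]
      exact hzL
    have hzc : ∀ a b, z a = z b := by
      apply kernel_const A hsymm hnonneg hconn
      rw [← hL]; exact hLz
    have hsum1 : ∑ k, ((L * Lp) *ᵥ y) k = 0 := by
      have e1 : ∑ k, ((L * Lp) *ᵥ y) k = (fun _ => (1:ℝ)) ⬝ᵥ ((L * Lp) *ᵥ y) := by
        simp [dotProduct]
      have e2 : (fun _ => (1:ℝ)) ᵥ* (L * Lp) = 0 := by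
        rw [← Matrix.vecMul_vecMul, h1L, Matrix.zero_vecMul]
      rw [e1, Matrix.dotProduct_mulVec, e2, zero_dotProduct]
    have hsumz : ∑ k, z k = 0 := by
      simp only [hz, Pi.sub_apply, Finset.sum_sub_distrib, hy, hsum1, sub_zero]
    have hzi : z i = 0 := by
      have : ∑ k, z k = (n : ℝ) * z i := by
        rw [Finset.sum_congr rfl fun k _ => hzc k i]
        simp [Finset.card_univ, mul_comm]
      rw [hsumz] at this
      have hn' : (n : ℝ) ≠ 0 := Nat.cast_ne_zero.mpr hn.ne'
      rcases mul_eq_zero.mp this.symm with h | h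
      · exact absurd h hn'
      · exact h
    funext k
    have hzk : y k - ((L * Lp) *ᵥ y) k = 0 := by
      have h6 := (hzc k i).trans hzi
      simpa [hz] using h6
    linarith
  -- the column vector y_j of the right-hand side
  set y : Fin n → ℝ := fun k => w k - (if k = j then s else 0) with hy'
  have hysum : ∑ k, y k = 0 := by
    simp [hy', Finset.sum_sub_distrib, Finset.sum_ite_eq', ← hs']
  have hLg : L *ᵥ (Lp *ᵥ y) = y := by
    rw [Matrix.mulVec_mulVec]
    exact hQfix y hysum
  have hLH : L *ᵥ (fun k => H k j) = y := by
    funext k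
    have hk := congrFun (congrFun hH k) j
    have lhs_eq : (L * H) k j = (L *ᵥ (fun m => H m j)) k := by
      simp [Matrix.mul_apply, Matrix.mulVec, dotProduct]
    have rhs_eq : (Matrix.vecMulVec w (fun _ => (1:ℝ)) - s • 1) k j = y k := by
      simp [Matrix.vecMulVec_apply, Matrix.sub_apply, Matrix.smul_apply, Matrix.one_apply,
        hy', mul_ite]
    rw [lhs_eq, rhs_eq] at hk
    exact hk
  have hd : L *ᵥ ((fun k => H k j) - (Lp *ᵥ y)) = 0 := by
    rw [Matrix.mulVec_sub, hLH, hLg, sub_self]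
  have hdc : ∀ a b, ((fun k => H k j) - (Lp *ᵥ y)) a = ((fun k => H k j) - (Lp *ᵥ y)) b := by
    apply kernel_const A hsymm hnonneg hconn
    rw [← hL]; exact hd
  have hHij : H i j = (Lp *ᵥ y) i - (Lp *ᵥ y) j := by
    have := hdc i j
    simp only [Pi.sub_apply, hHdiag j] at this
    linarith
  -- compute the entries of Lp *ᵥ y
  have hval : ∀ k, (Lp *ᵥ y) k = (∑ m, Lp k m * w m) - s * Lp k j := by
    intro k
    simp [Matrix.mulVec, dotProduct, hy', mul_sub, Finset.sum_sub_distrib, mul_ite,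
      Finset.sum_ite_eq', mul_comm]
  -- compute the target expression
  have htarget : Lp *ᵥ (Pi.single j 1 - π) = fun k => Lp k j - (∑ m, Lp k m * w m) / s := by
    funext k
    simp [Matrix.mulVec, dotProduct, hπ, Pi.single_apply, mul_sub, Finset.sum_sub_distrib,
      mul_ite, Finset.sum_ite_eq', ← hs', Finset.sum_div, mul_div_assoc]
  have hdot : (Pi.single j 1 - Pi.single i 1) ⬝ᵥ (Lp *ᵥ (Pi.single j 1 - π))
      = (Lp j j - (∑ m, Lp j m * w m) / s) - (Lp i j - (∑ m, Lp i m * w m) / s) := by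
    rw [htarget]
    simp [dotProduct, Pi.sub_apply, Pi.single_apply, sub_mul, ite_mul,
      Finset.sum_sub_distrib, Finset.sum_ite_eq']
  rw [hHij, hval i, hval j, hdot]
  field_simp
  ring
end

section
/- The Moore–Penrose pseudo-inverse of the weighted Laplacian L_W = W^{-1/2} L W^{-1/2} is L_W^+ = W^{1/2}(I - e \pi^T) L^+ (I - \pi e^T) W^{1/2}, where \pi = w/|w|. -/
open Matrix

lemma mp_transpose {n : ℕ} {M P : Matrix (Fin n) (Fin n) ℝ}
    (h : IsMoorePenroseInverse M P) : IsMoorePenroseInverse Mᵀ Pᵀ := by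
  obtain ⟨h1, h2, h3, h4⟩ := h
  refine ⟨?_, ?_, ?_, ?_⟩
  · calc Mᵀ * Pᵀ * Mᵀ = (M * (P * M))ᵀ := by rw [Matrix.transpose_mul M (P * M), Matrix.transpose_mul P M]
    _ = Mᵀ := by rw [← Matrix.mul_assoc, h1]
  · calc Pᵀ * Mᵀ * Pᵀ = (P * (M * P))ᵀ := by rw [Matrix.transpose_mul P (M * P), Matrix.transpose_mul M P]
    _ = Pᵀ := by rw [← Matrix.mul_assoc, h2]
  · calc (Mᵀ * Pᵀ)ᵀ = ((P * M)ᵀ)ᵀ := by simp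
    _ = P * M := Matrix.transpose_transpose _
    _ = (P * M)ᵀ := h4.symm
    _ = Mᵀ * Pᵀ := Matrix.transpose_mul _ _
  · calc (Pᵀ * Mᵀ)ᵀ = ((M * P)ᵀ)ᵀ := by simp
    _ = M * P := Matrix.transpose_transpose _
    _ = (M * P)ᵀ := h3.symm
    _ = Pᵀ * Mᵀ := Matrix.transpose_mul _ _

lemma mp_unique {n : ℕ} {M P Q : Matrix (Fin n) (Fin n) ℝ}
    (hP : IsMoorePenroseInverse M P) (hQ : IsMoorePenroseInverse M Q) : P = Q := by
  obtain ⟨hP1, hP2, hP3, hP4⟩ := hP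
  obtain ⟨hQ1, hQ2, hQ3, hQ4⟩ := hQ
  have e1 : M * P = M * Q := by
    calc M * P = (M * P)ᵀ := hP3.symm
    _ = ((M * Q * M) * P)ᵀ := by rw [hQ1]
    _ = ((M * Q) * (M * P))ᵀ := by rw [Matrix.mul_assoc]
    _ = (M * P)ᵀ * (M * Q)ᵀ := Matrix.transpose_mul _ _
    _ = (M * P) * (M * Q) := by rw [hP3, hQ3]
    _ = (M * P * M) * Q := by simp only [Matrix.mul_assoc]
    _ = M * Q := by rw [hP1]
  have e2 : P * M = Q * M := by
    calc P * M = (P * M)ᵀ := hP4.symm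
    _ = (P * (M * Q * M))ᵀ := by rw [hQ1]
    _ = ((P * M) * (Q * M))ᵀ := by simp only [Matrix.mul_assoc]
    _ = (Q * M)ᵀ * (P * M)ᵀ := Matrix.transpose_mul _ _
    _ = (Q * M) * (P * M) := by rw [hP4, hQ4]
    _ = Q * (M * P * M) := by simp only [Matrix.mul_assoc]
    _ = Q * M := by rw [hP1]
  calc P = P * M * P := hP2.symm
  _ = P * (M * Q) := by rw [Matrix.mul_assoc, ← e1]
  _ = (Q * M) * Q := by rw [← Matrix.mul_assoc, e2]
  _ = Q := hQ2

lemma laplacian_ker_const {n : ℕ} (A : Matrix (Fin n) (Fin n) ℝ)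
    (hsymm : A.IsSymm) (hnonneg : ∀ i j, 0 ≤ A i j)
    (hconn : ∀ i j : Fin n, Relation.ReflTransGen (fun a b => 0 < A a b) i j)
    (v : Fin n → ℝ)
    (hv : (Matrix.diagonal (A.mulVec 1) - A) *ᵥ v = 0) :
    ∀ i j, v i = v j := by
  have hrow : ∀ i, (∑ j, A i j * v j) = (∑ j, A i j) * v i := by
    intro i
    have h := congrFun hv i
    simp only [Matrix.mulVec, dotProduct, Matrix.sub_apply, Matrix.diagonal_apply,
      Pi.zero_apply, sub_mul, Finset.sum_sub_distrib, ite_mul, zero_mul,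
      Finset.sum_ite_eq, Finset.mem_univ, if_true, Pi.one_apply, mul_one,
      sub_eq_zero] at h
    rw [← h]
  have key_i : ∀ i, ∑ j, A i j * (v i - v j)^2
      = (∑ j, A i j * v j^2) - (∑ j, A i j * v j) * v i := by
    intro i
    calc ∑ j, A i j * (v i - v j)^2
        = ∑ j, (A i j * v i^2 - (A i j * v j) * (2 * v i) + A i j * v j^2) :=
          Finset.sum_congr rfl (fun j _ => by ring)
      _ = (∑ j, A i j) * v i^2 - (∑ j, A i j * v j) * (2 * v i) + ∑ j, A i j * v j^2 := by
          rw [Finset.sum_add_distrib, Finset.sum_sub_distrib, ← Finset.sum_mul, ← Finset.sum_mul]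
      _ = (∑ j, A i j * v j^2) - (∑ j, A i j * v j) * v i := by rw [hrow i]; ring
  have hsym' : ∀ i j, A i j = A j i := fun i j => by
    conv_lhs => rw [← hsymm]
    rfl
  have t1 : ∑ i, ∑ j, A i j * v j^2 = ∑ i, (∑ j, A i j) * v i^2 := by
    rw [Finset.sum_comm]
    refine Finset.sum_congr rfl (fun x _ => ?_)
    rw [← Finset.sum_mul]
    congr 1
    exact Finset.sum_congr rfl (fun y _ => hsym' y x)
  have t2 : ∑ i, (∑ j, A i j * v j) * v i = ∑ i, (∑ j, A i j) * v i^2 := by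
    refine Finset.sum_congr rfl (fun i _ => ?_)
    rw [hrow i]; ring
  have hT : ∑ i, ∑ j, A i j * (v i - v j)^2 = 0 := by
    calc ∑ i, ∑ j, A i j * (v i - v j)^2
        = ∑ i, ((∑ j, A i j * v j^2) - (∑ j, A i j * v j) * v i) :=
          Finset.sum_congr rfl (fun i _ => key_i i)
      _ = (∑ i, ∑ j, A i j * v j^2) - ∑ i, (∑ j, A i j * v j) * v i :=
          Finset.sum_sub_distrib _ _
      _ = 0 := by rw [t1, t2, sub_self]
  have hz : ∀ i j, A i j * (v i - v j)^2 = 0 := by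
    have h1 : ∀ i ∈ Finset.univ, (0:ℝ) ≤ ∑ j, A i j * (v i - v j)^2 :=
      fun i _ => Finset.sum_nonneg (fun j _ => mul_nonneg (hnonneg i j) (sq_nonneg _))
    have h2 := (Finset.sum_eq_zero_iff_of_nonneg h1).mp hT
    intro i j
    have h3 := (Finset.sum_eq_zero_iff_of_nonneg
      (fun j _ => mul_nonneg (hnonneg i j) (sq_nonneg (v i - v j)))).mp
      (h2 i (Finset.mem_univ i))
    exact h3 j (Finset.mem_univ j)
  have hedge : ∀ i j, 0 < A i j → v i = v j := by
    intro i j hij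
    have := hz i j
    rcases mul_eq_zero.mp this with h | h
    · exact absurd h (ne_of_gt hij)
    · have := pow_eq_zero_iff (n := 2) (by norm_num) |>.mp h
      linarith [sub_eq_zero.mp this]
  intro i j
  induction hconn i j with
  | refl => rfl
  | tail _ hbc ih => exact ih.trans (hedge _ _ hbc)

theorem weighted_laplacian_pseudoinverse
    (n : ℕ) (A : Matrix (Fin n) (Fin n) ℝ)
    (hsymm : A.IsSymm) (hnonneg : ∀ i j, 0 ≤ A i j) (hdiag : ∀ i, A i i = 0)
    (hconn : ∀ i j : Fin n, Relation.ReflTransGen (fun a b => 0 < A a b) i j)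
    (w : Fin n → ℝ) (hw : ∀ i, 0 < w i)
    (π : Fin n → ℝ) (hπ : π = fun i => w i / ∑ k, w k)
    (L : Matrix (Fin n) (Fin n) ℝ)
    (hL : L = Matrix.diagonal (A.mulVec 1) - A)
    (Lp : Matrix (Fin n) (Fin n) ℝ) (hLp : IsMoorePenroseInverse L Lp)
    (LW : Matrix (Fin n) (Fin n) ℝ)
    (hLW : LW = Matrix.diagonal (fun i => (Real.sqrt (w i))⁻¹) * L *
      Matrix.diagonal (fun i => (Real.sqrt (w i))⁻¹)) :
    IsMoorePenroseInverse LW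
      (Matrix.diagonal (fun i => Real.sqrt (w i)) *
        (1 - Matrix.vecMulVec (fun _ => (1 : ℝ)) π) * Lp *
        (1 - Matrix.vecMulVec π (fun _ => (1 : ℝ))) *
        Matrix.diagonal (fun i => Real.sqrt (w i))) := by
  rcases Nat.eq_zero_or_pos n with hn | hn
  · subst hn
    exact ⟨Matrix.ext fun i _ => i.elim0, Matrix.ext fun i _ => i.elim0,
      Matrix.ext fun i _ => i.elim0, Matrix.ext fun i _ => i.elim0⟩
  have hne : Nonempty (Fin n) := ⟨⟨0, hn⟩⟩
  set S := Matrix.diagonal (fun i => Real.sqrt (w i)) with hS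
  set Si := Matrix.diagonal (fun i => (Real.sqrt (w i))⁻¹) with hSi
  set E := Matrix.vecMulVec (fun _ => (1:ℝ)) π with hE
  set F := Matrix.vecMulVec π (fun _ => (1:ℝ)) with hF
  have hwT : 0 < ∑ k, w k := Finset.sum_pos (fun i _ => hw i) Finset.univ_nonempty
  have hπs : ∑ i, π i = 1 := by
    rw [hπ, ← Finset.sum_div]
    exact div_self (ne_of_gt hwT)
  have hsq : ∀ i, Real.sqrt (w i) ≠ 0 := fun i => ne_of_gt (Real.sqrt_pos.mpr (hw i))
  have hSiS : Si * S = 1 := by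
    rw [hSi, hS, Matrix.diagonal_mul_diagonal,
      show (fun i => (Real.sqrt (w i))⁻¹ * Real.sqrt (w i)) = fun _ => (1:ℝ) from
        funext fun i => inv_mul_cancel₀ (hsq i), Matrix.diagonal_one]
  have hSSi : S * Si = 1 := by
    rw [hS, hSi, Matrix.diagonal_mul_diagonal,
      show (fun i => Real.sqrt (w i) * (Real.sqrt (w i))⁻¹) = fun _ => (1:ℝ) from
        funext fun i => mul_inv_cancel₀ (hsq i), Matrix.diagonal_one]
  have hSt : Sᵀ = S := by rw [hS, Matrix.diagonal_transpose]
  have hSit : Siᵀ = Si := by rw [hSi, Matrix.diagonal_transpose]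
  have hEt : Eᵀ = F := by
    ext i j
    simp [hE, hF, Matrix.transpose_apply, Matrix.vecMulVec_apply, mul_comm]
  have hFt : Fᵀ = E := by
    ext i j
    simp [hE, hF, Matrix.transpose_apply, Matrix.vecMulVec_apply, mul_comm]
  have hLsymm : Lᵀ = L := by
    rw [hL, Matrix.transpose_sub, Matrix.diagonal_transpose, hsymm]
  have hLrow : ∀ i, ∑ j, L i j = 0 := by
    intro i
    rw [hL]
    simp only [Matrix.sub_apply, Matrix.diagonal_apply, Finset.sum_sub_distrib,
      Finset.sum_ite_eq, Finset.mem_univ, if_true, Matrix.mulVec, dotProduct,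
      Pi.one_apply, mul_one, sub_self]
  have hLcol : ∀ j, ∑ i, L i j = 0 := by
    intro j
    have h : ∀ i, L i j = L j i := fun i => congrFun (congrFun hLsymm j) i
    rw [Finset.sum_congr rfl (fun i _ => h i)]
    exact hLrow j
  have hLE : L * E = 0 := by
    ext i j
    rw [Matrix.mul_apply]
    simp only [hE, Matrix.vecMulVec_apply, one_mul, Matrix.zero_apply]
    rw [← Finset.sum_mul, hLrow i, zero_mul]
  have hFL : F * L = 0 := by
    ext i j
    rw [Matrix.mul_apply]
    simp only [hF, Matrix.vecMulVec_apply, mul_one, Matrix.zero_apply]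
    rw [← Finset.mul_sum, hLcol j, mul_zero]
  have hEE : E * E = E := by
    ext i j
    rw [Matrix.mul_apply]
    simp only [hE, Matrix.vecMulVec_apply, one_mul]
    rw [← Finset.sum_mul, hπs, one_mul]
  have hL1E : L * (1 - E) = L := by
    rw [Matrix.mul_sub, Matrix.mul_one, hLE, sub_zero]
  have h1FL : (1 - F) * L = L := by
    rw [Matrix.sub_mul, Matrix.one_mul, hFL, sub_zero]
  have h1E1E : (1 - E) * (1 - E) = 1 - E := by
    rw [Matrix.sub_mul, Matrix.one_mul, Matrix.mul_sub, Matrix.mul_one, hEE, sub_self, sub_zero]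
  obtain ⟨hLp1, hLp2, hLp3, hLp4⟩ := hLp
  have hLpsymm : Lpᵀ = Lp := by
    have h1 : IsMoorePenroseInverse Lᵀ Lpᵀ := mp_transpose ⟨hLp1, hLp2, hLp3, hLp4⟩
    rw [hLsymm] at h1
    exact mp_unique h1 ⟨hLp1, hLp2, hLp3, hLp4⟩
  have hLpL : Lp * L = L * Lp := by
    calc Lp * L = (Lp * L)ᵀ := hLp4.symm
    _ = Lᵀ * Lpᵀ := Matrix.transpose_mul _ _
    _ = L * Lp := by rw [hLsymm, hLpsymm]
  have key : ∀ u : Fin n → ℝ, (∑ i, u i) = 0 → (L * Lp) *ᵥ u = u := by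
    intro u hu
    have hLLLp : L * (L * Lp) = L := by
      rw [← hLpL, ← Matrix.mul_assoc, hLp1]
    have hd : L *ᵥ (u - (L * Lp) *ᵥ u) = 0 := by
      rw [Matrix.mulVec_sub, Matrix.mulVec_mulVec, hLLLp, sub_self]
    have hconst := laplacian_ker_const A hsymm hnonneg hconn _ (by rw [← hL]; exact hd)
    have hcolLLp : ∀ j, ∑ i, (L * Lp) i j = 0 := by
      intro j
      simp only [Matrix.mul_apply]
      rw [Finset.sum_comm]
      rw [Finset.sum_congr rfl (fun k (_ : k ∈ Finset.univ) => by
        rw [← Finset.sum_mul, hLcol k, zero_mul])]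
      exact Finset.sum_const_zero
    have hsLLp : ∑ i, ((L * Lp) *ᵥ u) i = 0 := by
      simp only [Matrix.mulVec, dotProduct]
      rw [Finset.sum_comm]
      rw [Finset.sum_congr rfl (fun j (_ : j ∈ Finset.univ) => by
        rw [← Finset.sum_mul, hcolLLp j, zero_mul])]
      exact Finset.sum_const_zero
    have hds : ∑ i, (u - (L * Lp) *ᵥ u) i = 0 := by
      simp only [Pi.sub_apply, Finset.sum_sub_distrib, hu, hsLLp, sub_zero]
    have hall : ∀ i, (u - (L * Lp) *ᵥ u) i = (u - (L * Lp) *ᵥ u) ⟨0, hn⟩ :=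
      fun i => hconst i ⟨0, hn⟩
    have hn0 : (u - (L * Lp) *ᵥ u) ⟨0, hn⟩ = 0 := by
      have hsum : (n : ℝ) * (u - (L * Lp) *ᵥ u) ⟨0, hn⟩ = 0 := by
        rw [← hds, Finset.sum_congr rfl (fun i _ => hall i), Finset.sum_const,
          Finset.card_univ, Fintype.card_fin, nsmul_eq_mul]
      have : (n : ℝ) ≠ 0 := Nat.cast_ne_zero.mpr (Nat.pos_iff_ne_zero.mp hn)
      exact (mul_eq_zero.mp hsum).resolve_left this
    funext i
    have h := hall i
    rw [hn0] at h
    have h2 : u i - ((L * Lp) *ᵥ u) i = 0 := h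
    linarith [h2]
  have KF : (L * Lp) * (1 - F) = 1 - F := by
    ext i j
    have hcolsum : ∑ i, (1 - F) i j = 0 := by
      simp only [Matrix.sub_apply, Matrix.one_apply, hF, Matrix.vecMulVec_apply,
        mul_one, Finset.sum_sub_distrib, Finset.sum_ite_eq', Finset.mem_univ,
        if_true, hπs, sub_self]
    have h2 := congrFun (key (fun i => (1 - F) i j) hcolsum) i
    simpa [Matrix.mulVec, dotProduct, Matrix.mul_apply] using h2
  have KE : (1 - E) * (Lp * L) = 1 - E := by
    have ht : ((1 - E) * (L * Lp))ᵀ = 1 - F := by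
      rw [Matrix.transpose_mul, hLp3, Matrix.transpose_sub, Matrix.transpose_one, hEt, KF]
    calc (1 - E) * (Lp * L) = (1 - E) * (L * Lp) := by rw [hLpL]
    _ = (((1 - E) * (L * Lp))ᵀ)ᵀ := (Matrix.transpose_transpose _).symm
    _ = (1 - F)ᵀ := by rw [ht]
    _ = 1 - E := by rw [Matrix.transpose_sub, Matrix.transpose_one, hFt]
  have hG1 : LW * (S * (1 - E) * Lp * (1 - F) * S) = Si * ((1 - F) * S) := by
    calc LW * (S * (1 - E) * Lp * (1 - F) * S)
        = Si * (L * (Si * (S * ((1 - E) * (Lp * ((1 - F) * S)))))) := by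
          rw [hLW]; simp only [Matrix.mul_assoc]
      _ = Si * (L * ((1 - E) * (Lp * ((1 - F) * S)))) := by
          rw [← Matrix.mul_assoc Si S, hSiS, Matrix.one_mul]
      _ = Si * ((L * (1 - E)) * (Lp * ((1 - F) * S))) := by
          rw [← Matrix.mul_assoc L (1 - E)]
      _ = Si * (((L * Lp) * (1 - F)) * S) := by
          rw [hL1E]; simp only [Matrix.mul_assoc]
      _ = Si * ((1 - F) * S) := by rw [KF]
  have hG2 : (S * (1 - E) * Lp * (1 - F) * S) * LW = S * ((1 - E) * Si) := by
    calc (S * (1 - E) * Lp * (1 - F) * S) * LW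
        = S * ((1 - E) * (Lp * ((1 - F) * (S * (Si * (L * Si)))))) := by
          rw [hLW]; simp only [Matrix.mul_assoc]
      _ = S * ((1 - E) * (Lp * ((1 - F) * (L * Si)))) := by
          rw [← Matrix.mul_assoc S Si, hSSi, Matrix.one_mul]
      _ = S * ((1 - E) * (Lp * (L * Si))) := by
          rw [← Matrix.mul_assoc (1 - F) L, h1FL]
      _ = S * (((1 - E) * (Lp * L)) * Si) := by simp only [Matrix.mul_assoc]
      _ = S * ((1 - E) * Si) := by rw [KE]
  have hsym_eq : Si * ((1 - F) * S) = S * ((1 - E) * Si) := by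
    ext i j
    simp only [hS, hSi, hE, hF, Matrix.diagonal_mul, Matrix.mul_diagonal,
      Matrix.sub_apply, Matrix.one_apply, Matrix.vecMulVec_apply, mul_one, one_mul]
    rcases eq_or_ne i j with h | h
    · subst h
      ring
    · simp only [if_neg h, hπ]
      have e1 : (Real.sqrt (w i))⁻¹ * w i = Real.sqrt (w i) := by
        rw [inv_mul_eq_div, div_eq_iff (hsq i)]
        exact (Real.mul_self_sqrt (le_of_lt (hw i))).symm
      have e2 : w j * (Real.sqrt (w j))⁻¹ = Real.sqrt (w j) := by
        rw [← div_eq_mul_inv, div_eq_iff (hsq j)]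
        exact (Real.mul_self_sqrt (le_of_lt (hw j))).symm
      linear_combination (-(Real.sqrt (w j)) / (∑ k, w k)) * e1 +
        (Real.sqrt (w i) / (∑ k, w k)) * e2
  have hGsym : (Si * ((1 - F) * S))ᵀ = Si * ((1 - F) * S) := by
    rw [Matrix.transpose_mul, Matrix.transpose_mul, Matrix.transpose_sub,
      Matrix.transpose_one, hFt, hSt, hSit, Matrix.mul_assoc, ← hsym_eq]
  refine ⟨?_, ?_, ?_, ?_⟩
  · calc LW * (S * (1 - E) * Lp * (1 - F) * S) * LW
        = (Si * ((1 - F) * S)) * LW := by rw [hG1]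
      _ = Si * ((1 - F) * (S * (Si * (L * Si)))) := by
          rw [hLW]; simp only [Matrix.mul_assoc]
      _ = Si * ((1 - F) * (L * Si)) := by
          rw [← Matrix.mul_assoc S Si, hSSi, Matrix.one_mul]
      _ = Si * (L * Si) := by rw [← Matrix.mul_assoc (1 - F) L, h1FL]
      _ = LW := by rw [hLW]; simp only [Matrix.mul_assoc]
  · calc (S * (1 - E) * Lp * (1 - F) * S) * LW * (S * (1 - E) * Lp * (1 - F) * S)
        = (S * ((1 - E) * Si)) * (S * (1 - E) * Lp * (1 - F) * S) := by rw [hG2]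
      _ = S * ((1 - E) * (Si * (S * ((1 - E) * (Lp * ((1 - F) * S)))))) := by
          simp only [Matrix.mul_assoc]
      _ = S * ((1 - E) * ((1 - E) * (Lp * ((1 - F) * S)))) := by
          rw [← Matrix.mul_assoc Si S, hSiS, Matrix.one_mul]
      _ = S * (((1 - E) * (1 - E)) * (Lp * ((1 - F) * S))) := by
          rw [← Matrix.mul_assoc (1 - E) (1 - E)]
      _ = S * ((1 - E) * (Lp * ((1 - F) * S))) := by rw [h1E1E]
      _ = S * (1 - E) * Lp * (1 - F) * S := by simp only [Matrix.mul_assoc]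
  · rw [hG1]
    exact hGsym
  · rw [hG2, ← hsym_eq]
    exact hGsym
end

section
/- With v the solution of the Dirichlet problem (v_i = 1, v_j = 0, L v = \alpha(e_i - e_j)) and q = \sum_k w_k v_k the weighted charge, the mean hitting times of the weighted random walk satisfy H_{ij} = q/\alpha and H_{ji} = (|w| - q)/\alpha; consequently C_{ij} = H_{ij} + H_{ji} = |w|/\alpha. -/
open Matrix

/-- A vector in the kernel of the Laplacian of a nonnegatively weighted symmetric graph is
constant along edges. -/
lemma lap_edge_const {n : ℕ} (A : Matrix (Fin n) (Fin n) ℝ)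
    (hsymm : A.IsSymm) (hnonneg : ∀ i j, 0 ≤ A i j)
    (y : Fin n → ℝ)
    (hy : (Matrix.diagonal (A.mulVec 1) - A).mulVec y = 0) :
    ∀ a b, 0 < A a b → y a = y b := by
  have hAsym : ∀ a b, A b a = A a b := fun a b => by
    conv_lhs => rw [← hsymm]
    rfl
  have h0 : ∀ a, (∑ b, A a b) * y a - ∑ b, A a b * y b = 0 := by
    intro a
    have h := congrFun hy a
    rw [Matrix.sub_mulVec] at h
    simp only [Pi.sub_apply, Matrix.mulVec_diagonal, Pi.zero_apply] at h
    have h1 : (A *ᵥ (1 : Fin n → ℝ)) a = ∑ b, A a b := by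
      simp [Matrix.mulVec, dotProduct]
    have h2 : (A *ᵥ y) a = ∑ b, A a b * y b := rfl
    rw [h1, h2] at h
    exact h
  have key : ∀ a, ∑ b, A a b * (y a * y a - y a * y b) = 0 := by
    intro a
    have e : y a * ((∑ b, A a b) * y a - ∑ b, A a b * y b)
        = ∑ b, A a b * (y a * y a - y a * y b) := by
      rw [Finset.sum_mul, mul_sub, Finset.mul_sum, Finset.mul_sum, ← Finset.sum_sub_distrib]
      exact Finset.sum_congr rfl fun b _ => by ring
    rw [← e, h0 a, mul_zero]
  have E1 : ∑ a, ∑ b, A a b * (y a * y a - y a * y b) = 0 := by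
    simp only [key, Finset.sum_const_zero]
  have E2 : ∑ a, ∑ b, A a b * (y b * y b - y a * y b) = 0 := by
    rw [Finset.sum_comm, ← E1]
    exact Finset.sum_congr rfl fun a _ => Finset.sum_congr rfl fun b _ => by rw [hAsym]; ring
  have E : ∑ a, ∑ b, A a b * (y a - y b) ^ 2 = 0 := by
    have e : ∀ a b : Fin n, A a b * (y a - y b) ^ 2
        = A a b * (y a * y a - y a * y b) + A a b * (y b * y b - y a * y b) := by
      intros; ring
    simp only [e, Finset.sum_add_distrib, E1, E2, add_zero]
  intro a b hab
  have hterm : ∀ a ∈ Finset.univ, (0:ℝ) ≤ ∑ b, A a b * (y a - y b) ^ 2 := by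
    intro a _
    exact Finset.sum_nonneg fun b _ => mul_nonneg (hnonneg a b) (sq_nonneg _)
  have h1 := (Finset.sum_eq_zero_iff_of_nonneg hterm).1 E a (Finset.mem_univ a)
  have h2 := (Finset.sum_eq_zero_iff_of_nonneg
    (fun b _ => mul_nonneg (hnonneg a b) (sq_nonneg _))).1 h1 b (Finset.mem_univ b)
  have h3 := (mul_eq_zero.1 h2).resolve_left (ne_of_gt hab)
  have h4 := sq_eq_zero_iff.1 h3
  linarith

/-- Dot product through a symmetric matrix is symmetric. -/
lemma symm_dot {n : ℕ} {M : Matrix (Fin n) (Fin n) ℝ} (h : Mᵀ = M) (x y : Fin n → ℝ) :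
    x ⬝ᵥ M *ᵥ y = y ⬝ᵥ M *ᵥ x := by
  rw [dotProduct_mulVec, ← mulVec_transpose, h, dotProduct_comm]

/-- With `v` the solution of the Dirichlet problem and `q = ∑ₖ wₖ vₖ` the weighted charge,
the hitting times of the weighted random walk satisfy `H i j = q / α`,
`H j i = (|w| - q) / α`, hence the commute time is `|w| / α`. -/
theorem dirichlet_hitting_and_commute_times
    (n : ℕ) (A : Matrix (Fin n) (Fin n) ℝ)
    (hsymm : A.IsSymm) (hnonneg : ∀ i j, 0 ≤ A i j) (hdiag : ∀ i, A i i = 0)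
    (hconn : ∀ i j : Fin n, Relation.ReflTransGen (fun a b => 0 < A a b) i j)
    (w : Fin n → ℝ) (hw : ∀ i, 0 < w i)
    (π : Fin n → ℝ) (hπ : π = fun i => w i / ∑ k, w k)
    (L : Matrix (Fin n) (Fin n) ℝ)
    (hL : L = Matrix.diagonal (A.mulVec 1) - A)
    (Lp : Matrix (Fin n) (Fin n) ℝ) (hLp : IsMoorePenroseInverse L Lp)
    (H : Matrix (Fin n) (Fin n) ℝ)
    (hH : ∀ i j, H i j =
      (∑ k, w k) * ((Pi.single j 1 - Pi.single i 1) ⬝ᵥ Lp.mulVec (Pi.single j 1 - π)))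
    (i j : Fin n) (hij : i ≠ j)
    (hpos : 0 < (Pi.single i 1 - Pi.single j 1) ⬝ᵥ Lp.mulVec (Pi.single i 1 - Pi.single j 1))
    (α : ℝ)
    (hα : α = ((Pi.single i 1 - Pi.single j 1) ⬝ᵥ Lp.mulVec (Pi.single i 1 - Pi.single j 1))⁻¹)
    (v : Fin n → ℝ)
    (hv : L.mulVec v = α • (Pi.single i 1 - Pi.single j 1))
    (hvi : v i = 1) (hvj : v j = 0)
    (q : ℝ) (hq : q = ∑ k, w k * v k) :
    H i j = q / α ∧ H j i = ((∑ k, w k) - q) / α ∧ H i j + H j i = (∑ k, w k) / α := by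
  obtain ⟨hL1, hL2, hL3, hL4⟩ := hLp
  have hS : 0 < ∑ k, w k := Finset.sum_pos (fun k _ => hw k) ⟨i, Finset.mem_univ i⟩
  have hSne : (∑ k, w k) ≠ 0 := ne_of_gt hS
  have hα0 : α ≠ 0 := by rw [hα]; exact ne_of_gt (inv_pos.2 hpos)
  have hLsymm : Lᵀ = L := by
    rw [hL, transpose_sub, diagonal_transpose, hsymm]
  have hLpsymm : Lpᵀ = Lp := by
    have h1 : IsMoorePenroseInverse L Lpᵀ := by
      have := mp_transpose ⟨hL1, hL2, hL3, hL4⟩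
      rwa [hLsymm] at this
    exact mp_unique h1 ⟨hL1, hL2, hL3, hL4⟩
  -- the projected potential
  set u : Fin n → ℝ := (Lp * L) *ᵥ v with hu_def
  have hu : α • (Lp *ᵥ (Pi.single i 1 - Pi.single j 1)) = u := by
    have h : Lp *ᵥ (L *ᵥ v) = u := by rw [Matrix.mulVec_mulVec]
    rw [hv, Matrix.mulVec_smul] at h
    exact h
  have hLpij : Lp *ᵥ (Pi.single i 1 - Pi.single j 1) = α⁻¹ • u := by
    rw [← hu, smul_smul, inv_mul_cancel₀ hα0, one_smul]
  -- v - u is in the kernel of the Laplacian, hence constant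
  have hker : (Matrix.diagonal (A.mulVec 1) - A).mulVec (v - u) = 0 := by
    rw [← hL, Matrix.mulVec_sub]
    have h : L *ᵥ u = L *ᵥ v := by
      rw [hu_def, Matrix.mulVec_mulVec, ← mul_assoc, hL1]
    rw [h, sub_self]
  have hedge := lap_edge_const A hsymm hnonneg (v - u) hker
  have hconst : ∀ a b : Fin n, (v - u) a = (v - u) b := by
    intro a b
    have h := hconn a b
    induction h with
    | refl => rfl
    | tail _ hbc ih => exact ih.trans (hedge _ _ hbc)
  set c : ℝ := v j - u j with hc_def
  have huv : ∀ a, u a = v a - c := by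
    intro a
    have h := hconst a j
    simp only [Pi.sub_apply] at h
    rw [hc_def]; linarith
  -- sums involving the stationary distribution
  have hπ1 : ∑ k, π k = 1 := by
    rw [hπ, ← Finset.sum_div, div_self hSne]
  have hπv : ∑ k, π k * v k = q / (∑ k, w k) := by
    rw [hπ, hq, Finset.sum_div]
    exact Finset.sum_congr rfl fun k _ => by ring
  -- the key dot product
  have hdot : ∀ a, (Pi.single a 1 - π) ⬝ᵥ u = v a - q / (∑ k, w k) := by
    intro a
    rw [sub_dotProduct, single_dotProduct, one_mul]
    have hp : π ⬝ᵥ u = ∑ k, π k * u k := rfl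
    rw [hp]
    have h1 : ∑ k, π k * u k = (∑ k, π k * v k) - (∑ k, π k) * c := by
      simp only [huv, mul_sub]
      rw [Finset.sum_sub_distrib, Finset.sum_mul]
    rw [huv a, h1, hπv, hπ1, one_mul]
    ring
  have g1 : H i j = q / α := by
    rw [hH i j, symm_dot hLpsymm]
    have h1 : (Pi.single j 1 - Pi.single i 1 : Fin n → ℝ)
        = -(Pi.single i 1 - Pi.single j 1) := by rw [neg_sub]
    rw [h1, Matrix.mulVec_neg, hLpij, dotProduct_neg, dotProduct_smul, hdot j, hvj, smul_eq_mul]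
    field_simp
    ring
  have g2 : H j i = ((∑ k, w k) - q) / α := by
    rw [hH j i, symm_dot hLpsymm, hLpij, dotProduct_smul, hdot i, hvi, smul_eq_mul]
    field_simp
  refine ⟨g1, g2, ?_⟩
  rw [g1, g2, ← add_div]
  congr 1
  ring
end
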